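/- For every real x with 1/2 < x ≤ 1, one has 1/4 − (1 − x^3)^3/(27 x^3) > 0.05, so the discriminant q(x)^2/4 + p(x)^3/27 of the depressed cubic y^3 + p(x) y + q(x) = 0 with p(x) = (x^3 − 1)/x and q(x) = −1 is strictly positive. -/
import Mathlib


theorem stmt_3 (x : ℝ) (hx : 1 / 2 < x) (hx1 : x ≤ 1) :
    1 / 4 - (1 - x ^ 3) ^ 3 / (27 * x ^ 3) > 0.05 ∧
    ((-1 : ℝ)) ^ 2 / 4 + ((x ^ 3 - 1) / x) ^ 3 / 27 > 0 := by
  have hx0 : 0 < x := by linarith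
  have hx3 : (0:ℝ) < 27 * x ^ 3 := by positivity
  have h8 : 1 / 8 < x ^ 3 := by nlinarith [sq_nonneg (x - 1/2), sq_nonneg (x + 1/2)]
  have h9 : x ^ 3 ≤ 1 := by nlinarith [sq_nonneg (x - 1), sq_nonneg (x + 1)]
  have hkey : (1 - x ^ 3) ^ 3 < 0.2 * (27 * x ^ 3) := by
    nlinarith [sq_nonneg (x ^ 3 - 1/8), sq_nonneg (1 - x ^ 3),
      mul_nonneg (sq_nonneg (1 - x ^ 3)) (le_of_lt (by linarith : (0:ℝ) < x ^ 3 - 1/8))]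
  have h1 : (1 - x ^ 3) ^ 3 / (27 * x ^ 3) < 0.2 := by
    rw [div_lt_iff₀ hx3]; linarith
  constructor
  · norm_num at h1 ⊢; linarith
  · have : ((x ^ 3 - 1) / x) ^ 3 / 27 = -((1 - x ^ 3) ^ 3 / (27 * x ^ 3)) := by
      field_simp; ring
    rw [this]; norm_num; linarith
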